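/- For every ξ ∈ ℂ³, the vector χ := (εξ) ×_ℂ (μξ) (the cross product in ℂ³) satisfies M(ξ)·χ = (ξᵀεξ)·χ. That is, (εξ) × (μξ) is an eigenvector of M(ξ) with eigenvalue ξᵀεξ. -/

import Mathlib

open Matrix

/-- The principal symbol `M_H(ξ)`: `M(ξ) = α (ε⁻¹μξ)(μξ)ᵀ + (ξᵀεξ) I − ξ(εξ)ᵀ`,
with `α = √(det ε / det μ)`. -/
noncomputable def MH (ε μ : Matrix (Fin 3) (Fin 3) ℝ) (ξ : Fin 3 → ℂ) :
    Matrix (Fin 3) (Fin 3) ℂ :=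
  (Real.sqrt (ε.det / μ.det) : ℂ) •
      vecMulVec (((ε.map Complex.ofReal)⁻¹ * μ.map Complex.ofReal).mulVec ξ)
        ((μ.map Complex.ofReal).mulVec ξ)
    + (ξ ⬝ᵥ (ε.map Complex.ofReal).mulVec ξ) • (1 : Matrix (Fin 3) (Fin 3) ℂ)
    - vecMulVec ξ ((ε.map Complex.ofReal).mulVec ξ)

lemma vmv_mulVec (a b w : Fin 3 → ℂ) : (vecMulVec a b).mulVec w = (b ⬝ᵥ w) • a := by
  ext i
  simp [vecMulVec, mulVec, dotProduct, Fin.sum_univ_three]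
  ring

/-- `(εξ) × (μξ)` is an eigenvector of `M(ξ)` with eigenvalue `ξᵀεξ`. -/
theorem MH_eigenvector_cross (ε μ : Matrix (Fin 3) (Fin 3) ℝ) (hε : ε.PosDef)
    (hμ : μ.PosDef) (ξ : Fin 3 → ℂ) :
    (MH ε μ ξ).mulVec
        (crossProduct ((ε.map Complex.ofReal).mulVec ξ) ((μ.map Complex.ofReal).mulVec ξ))
      = (ξ ⬝ᵥ (ε.map Complex.ofReal).mulVec ξ) •
          crossProduct ((ε.map Complex.ofReal).mulVec ξ)
            ((μ.map Complex.ofReal).mulVec ξ) := by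
  set e := (ε.map Complex.ofReal).mulVec ξ
  set m := (μ.map Complex.ofReal).mulVec ξ
  have h1 : m ⬝ᵥ crossProduct e m = 0 := dot_cross_self e m
  have h2 : e ⬝ᵥ crossProduct e m = 0 := dot_self_cross e m
  simp [MH, sub_mulVec, add_mulVec, smul_mulVec, vmv_mulVec, h1, h2]
  rw [show (μ.map Complex.ofReal *ᵥ ξ) = m from rfl, show (ε.map Complex.ofReal *ᵥ ξ) = e from rfl]
  simp [h1, h2]
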